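/- arXiv:1601.04551 — 2 statements merged into one kernel-verified Lean document; each statement's English description precedes it below -/
import Mathlib

section
/- The tensor (categorical) product G × H of two connected graphs G and H is connected if and only if at least one of G and H is non-bipartite. -/
open SimpleGraph

variable {α β γ : Type*}

/-- Tensor (categorical) product of simple graphs. -/
def tensor (G : SimpleGraph α) (H : SimpleGraph β) : SimpleGraph (α × β) where
  Adj x y := G.Adj x.1 y.1 ∧ H.Adj x.2 y.2
  symm := ⟨fun _ _ ⟨h1, h2⟩ => ⟨h1.symm, h2.symm⟩⟩
  loopless := ⟨fun x ⟨h1, _⟩ => G.loopless.irrefl x.1 h1⟩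

/-- Projection of a walk in the tensor product to the first factor. -/
def projG {G : SimpleGraph α} {H : SimpleGraph β} :
    ∀ {x y : α × β}, (tensor G H).Walk x y → G.Walk x.1 y.1
  | _, _, SimpleGraph.Walk.nil => SimpleGraph.Walk.nil
  | _, _, SimpleGraph.Walk.cons h p => SimpleGraph.Walk.cons h.1 (projG p)

/-- Projection of a walk in the tensor product to the second factor. -/
def projH {G : SimpleGraph α} {H : SimpleGraph β} :
    ∀ {x y : α × β}, (tensor G H).Walk x y → H.Walk x.2 y.2
  | _, _, SimpleGraph.Walk.nil => SimpleGraph.Walk.nil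
  | _, _, SimpleGraph.Walk.cons h p => SimpleGraph.Walk.cons h.2 (projH p)

/-- One-step reduction: deleting a consecutive backtracking pair `e, e⁻¹`. -/
inductive RedStep (G : SimpleGraph α) : ∀ {u v : α}, G.Walk u v → G.Walk u v → Prop
  | cancel {u v a b : α} (h : G.Adj a b) (p : G.Walk u a) (q : G.Walk a v) :
      RedStep G (p.append (SimpleGraph.Walk.cons h (SimpleGraph.Walk.cons h.symm q)))
        (p.append q)

/-- A walk is reduced if no backtracking cancellation applies to it. -/
def Reduced {G : SimpleGraph α} {u v : α} (W : G.Walk u v) : Prop :=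
  ∀ W', ¬ RedStep G W W'

/-- Homotopy of walks: equivalence generated by cancellations. -/
def RedEquiv (G : SimpleGraph α) {u v : α} (W W' : G.Walk u v) : Prop :=
  Relation.EqvGen (fun p q => RedStep G p q) W W'

/-- One elementary step of square-equivalence. -/
inductive SqStep (G : SimpleGraph α) : ∀ {u v : α}, G.Walk u v → G.Walk u v → Prop
  | cancel {u v a b : α} (h : G.Adj a b) (p : G.Walk u a) (q : G.Walk a v) :
      SqStep G (p.append (SimpleGraph.Walk.cons h (SimpleGraph.Walk.cons h.symm q)))
        (p.append q)
  | square {u v a b c d : α} (hab : G.Adj a b) (hbc : G.Adj b c) (had : G.Adj a d)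
      (hdc : G.Adj d c) (p : G.Walk u a) (q : G.Walk c v) :
      SqStep G (p.append (SimpleGraph.Walk.cons hab (SimpleGraph.Walk.cons hbc q)))
        (p.append (SimpleGraph.Walk.cons had (SimpleGraph.Walk.cons hdc q)))

/-- Square-equivalence of walks. -/
def SqEquiv (G : SimpleGraph α) {u v : α} (W W' : G.Walk u v) : Prop :=
  Relation.EqvGen (fun p q => SqStep G p q) W W'

/-- Natural-number power of a closed walk (iterated concatenation). -/
def wpow {G : SimpleGraph α} {u : α} (W : G.Walk u u) : ℕ → G.Walk u u
  | 0 => SimpleGraph.Walk.nil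
  | n + 1 => W.append (wpow W n)

/-- Integer power of a closed walk. -/
def wzpow {G : SimpleGraph α} {u : α} (W : G.Walk u u) : ℤ → G.Walk u u
  | Int.ofNat n => wpow W n
  | Int.negSucc n => wpow W.reverse (n + 1)

/-- A walk `p` is a prefix of `q` (same starting vertex). -/
def WalkPrefix {G : SimpleGraph α} {u x y : α} (p : G.Walk u x) (q : G.Walk u y) : Prop :=
  ∃ r : G.Walk x y, q = p.append r

/-- `K` is square-free: every square is trivial. -/
def SqFree (K : SimpleGraph γ) : Prop :=
  ∀ a b c d : γ, K.Adj a b → K.Adj b c → K.Adj c d → K.Adj d a → a = c ∨ b = d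

/-- The circular clique `K_{p/q}` on `ZMod p`. -/
def circClique (p q : ℕ) : SimpleGraph (ZMod p) where
  Adj i j := i ≠ j ∧ ∃ k : ℕ, q ≤ k ∧ k ≤ p - q ∧ (j = i + (k : ZMod p) ∨ i = j + (k : ZMod p))
  symm := ⟨by
    rintro i j ⟨hne, k, h1, h2, h3 | h3⟩
    · exact ⟨hne.symm, k, h1, h2, Or.inr h3⟩
    · exact ⟨hne.symm, k, h1, h2, Or.inl h3⟩⟩
  loopless := ⟨fun i h => h.1 rfl⟩



private lemma wpow_length {G : SimpleGraph α} {u : α} (W : G.Walk u u) (n : ℕ) :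
    (wpow W n).length = n * W.length := by
  induction n with
  | zero => simp [wpow]
  | succ n ih =>
    show (W.append (wpow W n)).length = _
    rw [SimpleGraph.Walk.length_append, ih]
    ring

private lemma exists_adj {G : SimpleGraph α} (hG : G.Connected)
    (hGe : ∃ a b : α, G.Adj a b) (x : α) : ∃ y, G.Adj x y := by
  obtain ⟨a, b, hab⟩ := hGe
  obtain ⟨w⟩ := hG.preconnected x a
  cases w with
  | nil => exact ⟨b, hab⟩
  | cons h _ => exact ⟨_, h⟩

private lemma lift_reachable {G : SimpleGraph α} {H : SimpleGraph β} {a a' : α}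
    (p : G.Walk a a') :
    ∀ {b b' : β} (q : H.Walk b b'), p.length = q.length →
      (tensor G H).Reachable (a, b) (a', b') := by
  induction p with
  | nil =>
    intro b b' q h
    have hb : b = b' := SimpleGraph.Walk.eq_of_length_eq_zero (by simpa using h.symm)
    subst hb
    exact SimpleGraph.Reachable.refl _
  | cons hadj p ih =>
    intro b b' q h
    cases q with
    | nil => simp at h
    | cons hadj' q' =>
      exact (SimpleGraph.Adj.reachable (G := tensor G H) ⟨hadj, hadj'⟩).trans
        (ih q' (by simpa using h))

private lemma walk_parity {G : SimpleGraph α} {H : SimpleGraph β}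
    (cG : G.Coloring (Fin 2)) (cH : H.Coloring (Fin 2)) :
    ∀ {x y : α × β}, (tensor G H).Walk x y →
      ((cG x.1).val + (cH x.2).val) % 2 = ((cG y.1).val + (cH y.2).val) % 2 := by
  intro x y w
  induction w with
  | nil => rfl
  | @cons x z y h _ ih =>
    have h1 : (cG x.1).val ≠ (cG z.1).val := fun he => cG.valid h.1 (Fin.val_injective he)
    have h2 : (cH x.2).val ≠ (cH z.2).val := fun he => cH.valid h.2 (Fin.val_injective he)
    have b1 := (cG x.1).isLt
    have b2 := (cG z.1).isLt
    have b3 := (cH x.2).isLt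
    have b4 := (cH z.2).isLt
    omega

private lemma exists_odd_closed {G : SimpleGraph α} (hG : G.Connected)
    (h : ¬ G.Colorable 2) : ∃ (u : α) (c : G.Walk u u), Odd c.length := by
  by_contra hc
  push_neg at hc
  apply h
  have v0 : α := hG.nonempty.some
  have w : ∀ u, G.Walk v0 u := fun u => Classical.choice (hG.preconnected v0 u)
  refine ⟨SimpleGraph.Coloring.mk (fun u => ⟨(w u).length % 2, by omega⟩) ?_⟩
  intro u v hadj heq
  have heq' : (w u).length % 2 = (w v).length % 2 := congrArg Fin.val heq
  have hcl := hc v0 ((w u).append (SimpleGraph.Walk.cons hadj (w v).reverse))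
  rw [Nat.not_odd_iff_even] at hcl
  obtain ⟨k, hk⟩ := hcl
  rw [SimpleGraph.Walk.length_append, SimpleGraph.Walk.length_cons,
    SimpleGraph.Walk.length_reverse] at hk
  omega

private lemma tensor_connected_of_odd {G : SimpleGraph α} {H : SimpleGraph β}
    (hG : G.Connected) (hH : H.Connected)
    (hGe : ∃ a b : α, G.Adj a b) (hHe : ∃ a b : β, H.Adj a b)
    (hodd : ∃ (u : α) (c : G.Walk u u), Odd c.length) :
    (tensor G H).Connected := by
  obtain ⟨u, c, hcodd⟩ := hodd
  obtain ⟨k0, hk0⟩ := hcodd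
  have hpre : (tensor G H).Preconnected := by
    rintro ⟨a, b⟩ ⟨a', b'⟩
    obtain ⟨p⟩ := hG.preconnected a a'
    obtain ⟨q⟩ := hH.preconnected b b'
    obtain ⟨p', hp'⟩ : ∃ p' : G.Walk a a', p'.length % 2 = q.length % 2 := by
      by_cases hpar : p.length % 2 = q.length % 2
      · exact ⟨p, hpar⟩
      · obtain ⟨t⟩ := hG.preconnected a' u
        refine ⟨p.append (t.append (c.append t.reverse)), ?_⟩
        rw [SimpleGraph.Walk.length_append, SimpleGraph.Walk.length_append,
          SimpleGraph.Walk.length_append, SimpleGraph.Walk.length_reverse]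
        omega
    rcases le_total p'.length q.length with hle | hle
    · obtain ⟨y, hy⟩ := exists_adj hG hGe a'
      obtain ⟨k, hk⟩ : ∃ k, q.length = p'.length + 2 * k := ⟨(q.length - p'.length) / 2, by omega⟩
      refine lift_reachable
        (p'.append (wpow (SimpleGraph.Walk.cons hy (SimpleGraph.Walk.cons hy.symm
          SimpleGraph.Walk.nil)) k)) q ?_
      rw [SimpleGraph.Walk.length_append, wpow_length]
      simp only [SimpleGraph.Walk.length_cons, SimpleGraph.Walk.length_nil]
      omega
    · obtain ⟨y, hy⟩ := exists_adj hH hHe b'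
      obtain ⟨k, hk⟩ : ∃ k, p'.length = q.length + 2 * k := ⟨(p'.length - q.length) / 2, by omega⟩
      refine lift_reachable p'
        (q.append (wpow (SimpleGraph.Walk.cons hy (SimpleGraph.Walk.cons hy.symm
          SimpleGraph.Walk.nil)) k)) ?_
      rw [SimpleGraph.Walk.length_append, wpow_length]
      simp only [SimpleGraph.Walk.length_cons, SimpleGraph.Walk.length_nil]
      omega
  haveI : Nonempty (α × β) := ⟨(hG.nonempty.some, hH.nonempty.some)⟩
  exact ⟨hpre⟩


/-- for connected graphs `G`, `H` each having an edge, the tensor product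
`G × H` is connected iff at least one of `G`, `H` is non-bipartite. -/
theorem tensor_connected_iff {G : SimpleGraph α} {H : SimpleGraph β}
    (hG : G.Connected) (hH : H.Connected)
    (hGe : ∃ a b : α, G.Adj a b) (hHe : ∃ a b : β, H.Adj a b) :
    (tensor G H).Connected ↔ (¬ G.Colorable 2 ∨ ¬ H.Colorable 2) := by
  constructor
  · intro hconn
    by_contra hcol
    push_neg at hcol
    obtain ⟨⟨cG⟩, ⟨cH⟩⟩ := hcol
    obtain ⟨a, b, hab⟩ := hGe
    have c : β := hH.nonempty.some
    obtain ⟨w⟩ := hconn.preconnected (a, c) (b, c)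
    have hpar := walk_parity cG cH w
    have h1 : (cG a).val ≠ (cG b).val := fun he => cG.valid hab (Fin.val_injective he)
    have b1 := (cG a).isLt
    have b2 := (cG b).isLt
    have b3 := (cH c).isLt
    simp only at hpar
    omega
  · rintro (hnc | hnc)
    · exact tensor_connected_of_odd hG hH hGe hHe (exists_odd_closed hG hnc)
    · have hconn' : (tensor H G).Connected :=
        tensor_connected_of_odd hH hG hHe hGe (exists_odd_closed hH hnc)
      have hpre : (tensor G H).Preconnected := by
        rintro ⟨a, b⟩ ⟨a', b'⟩
        exact (hconn'.preconnected (b, a) (b', a')).map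
          (⟨Prod.swap, fun h => ⟨h.2, h.1⟩⟩ : tensor H G →g tensor G H)
      haveI : Nonempty (α × β) := ⟨(hG.nonempty.some, hH.nonempty.some)⟩
      exact ⟨hpre⟩
end

section
/- Generalized version of the bipartite-cut lemma: let mu : G × H -> K be a graph homomorphism, H' an induced subgraph of H, and G' the spanning subgraph of G obtained by removing every edge gg' of G such that mu(g,h)mu(g',h') is an edge of K for all h, h' in V(H'). If there is a graph homomorphism G' -> H', then there is a graph homomorphism G -> K. -/
open SimpleGraph

variable {α β γ : Type*}

/-- generalized bipartite-cut lemma. Let `mu : G × H → K`, let `H'` be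
the subgraph of `H` induced on a vertex set `s`, and let `G'` be the spanning
subgraph of `G` obtained by removing every edge `gg'` such that `mu(g,h)mu(g',h')`
is an edge of `K` for all `h, h' ∈ s`. If `G' → H'`, then `G → K`. -/
theorem hom_of_cut_hom {G : SimpleGraph α} {H : SimpleGraph β} {K : SimpleGraph γ}
    (mu : tensor G H →g K) (s : Set β) (G' : SimpleGraph α)
    (hG' : ∀ g g' : α, G'.Adj g g' ↔
      G.Adj g g' ∧ ¬ (∀ h ∈ s, ∀ h' ∈ s, K.Adj (mu (g, h)) (mu (g', h'))))
    (hom : G' →g (H.induce s)) :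
    Nonempty (G →g K) := by
  refine ⟨⟨fun g => mu (g, (hom g : β)), ?_⟩⟩
  intro g g' hgg'
  by_cases hG : G'.Adj g g'
  · have hadj := hom.map_adj hG
    exact mu.map_adj ⟨hgg', hadj⟩
  · have := (hG' g g')
    have hall : ∀ h ∈ s, ∀ h' ∈ s, K.Adj (mu (g, h)) (mu (g', h')) := by
      by_contra hc
      exact hG ((hG' g g').mpr ⟨hgg', hc⟩)
    exact hall _ (hom g).2 _ (hom g').2
end
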